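/- Fix ω₁, ω₂ ∈ ℂ∖{0} and λ ∈ ℂ; set q = exp(πiω₁/ω₂) and assume q² ≠ 1. On the space of all functions φ : ℂ → ℂ define linear operators by (Kφ)(t) = e^{πiλ/ω₂}·φ(t − iω₁), (K'φ)(t) = e^{−πiλ/ω₂}·φ(t + iω₁), (Eφ)(t) = (q − q⁻¹)⁻¹·e^{−2πt/ω₂}·(φ(t) − φ(t − iω₁)), (Fφ)(t) = q(q − q⁻¹)⁻¹·e^{2πt/ω₂}·(e^{πiλ/ω₂}·φ(t) − e^{−πiλ/ω₂}·φ(t + iω₁)). Then: (i) K ∘ K' = K' ∘ K = id; (ii) K ∘ E = q²·(E ∘ K); (iii) K ∘ F = q⁻²·(F ∘ K); (iv) (q − q⁻¹)·(E ∘ F − F ∘ E) = K − K'; (v) the Casimir operator acts as a scalar: q·K + q⁻¹·K' + (q − q⁻¹)²·(F ∘ E) = (q·e^{πiλ/ω₂} + q⁻¹·e^{−πiλ/ω₂})·id. (The principal series representation π_λ of U_q(sl(2,ℝ)).) -/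

import Mathlib

set_option maxHeartbeats 1000000

/-- The operator `φ(t) ↦ g(t)·φ(t + s)` on functions `ℂ → ℂ`. -/
noncomputable def shiftMulOp (g : ℂ → ℂ) (s : ℂ) : (ℂ → ℂ) →ₗ[ℂ] (ℂ → ℂ) where
  toFun φ := fun t => g t * φ (t + s)
  map_add' φ ψ := by funext t; simp [mul_add]
  map_smul' c φ := by funext t; simp [smul_eq_mul]; ring

lemma exp_add_sq' (x y : ℂ) : Complex.exp (x + (y + y)) = Complex.exp x * Complex.exp y ^ 2 := by
  rw [Complex.exp_add, Complex.exp_add, sq]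

lemma exp_sub_sq' (x y : ℂ) : Complex.exp (x - (y + y)) = Complex.exp x * (Complex.exp y ^ 2)⁻¹ := by
  rw [Complex.exp_sub, Complex.exp_add, sq, div_eq_mul_inv]

theorem principal_series_representation (ω₁ ω₂ lam : ℂ) (hω₁ : ω₁ ≠ 0) (hω₂ : ω₂ ≠ 0)
    (hq2 : Complex.exp ((Real.pi : ℂ) * Complex.I * ω₁ / ω₂) ^ 2 ≠ 1) :
    let q := Complex.exp ((Real.pi : ℂ) * Complex.I * ω₁ / ω₂)
    let K := shiftMulOp (fun _ => Complex.exp ((Real.pi : ℂ) * Complex.I * lam / ω₂))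
        (-(Complex.I * ω₁))
    let K' := shiftMulOp (fun _ => Complex.exp (-((Real.pi : ℂ) * Complex.I * lam / ω₂)))
        (Complex.I * ω₁)
    let E := (q - q⁻¹)⁻¹ •
        (shiftMulOp (fun t => Complex.exp (-(2 * (Real.pi : ℂ) * t / ω₂))) 0
          - shiftMulOp (fun t => Complex.exp (-(2 * (Real.pi : ℂ) * t / ω₂))) (-(Complex.I * ω₁)))
    let F := (q * (q - q⁻¹)⁻¹) •
        (Complex.exp ((Real.pi : ℂ) * Complex.I * lam / ω₂) •
            shiftMulOp (fun t => Complex.exp (2 * (Real.pi : ℂ) * t / ω₂)) 0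
          - Complex.exp (-((Real.pi : ℂ) * Complex.I * lam / ω₂)) •
            shiftMulOp (fun t => Complex.exp (2 * (Real.pi : ℂ) * t / ω₂)) (Complex.I * ω₁))
    (K ∘ₗ K' = LinearMap.id ∧ K' ∘ₗ K = LinearMap.id) ∧
    K ∘ₗ E = q ^ 2 • (E ∘ₗ K) ∧
    K ∘ₗ F = (q⁻¹) ^ 2 • (F ∘ₗ K) ∧
    (q - q⁻¹) • (E ∘ₗ F - F ∘ₗ E) = K - K' ∧
    q • K + q⁻¹ • K' + (q - q⁻¹) ^ 2 • (F ∘ₗ E)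
      = (q * Complex.exp ((Real.pi : ℂ) * Complex.I * lam / ω₂)
          + q⁻¹ * Complex.exp (-((Real.pi : ℂ) * Complex.I * lam / ω₂))) • LinearMap.id := by
  intro q K K' E F
  have hq0 : Complex.exp ((Real.pi : ℂ) * Complex.I * ω₁ / ω₂) ≠ 0 := Complex.exp_ne_zero _
  have hd : Complex.exp ((Real.pi : ℂ) * Complex.I * ω₁ / ω₂)
      - (Complex.exp ((Real.pi : ℂ) * Complex.I * ω₁ / ω₂))⁻¹ ≠ 0 := by
    intro h
    refine hq2 ?_
    rw [sq]
    nth_rewrite 2 [sub_eq_zero.mp h]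
    exact mul_inv_cancel₀ hq0
  have hb0 : Complex.exp ((Real.pi : ℂ) * Complex.I * lam / ω₂) ≠ 0 := Complex.exp_ne_zero _
  have h21 : Complex.exp ((Real.pi : ℂ) * Complex.I * ω₁ / ω₂) ^ 2 - 1 ≠ 0 :=
    sub_ne_zero.mpr hq2
  have hd2 : (Complex.exp ((Real.pi : ℂ) * Complex.I * ω₁ / ω₂)
      - (Complex.exp ((Real.pi : ℂ) * Complex.I * ω₁ / ω₂))⁻¹)⁻¹
      = Complex.exp ((Real.pi : ℂ) * Complex.I * ω₁ / ω₂)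
        * (Complex.exp ((Real.pi : ℂ) * Complex.I * ω₁ / ω₂) ^ 2 - 1)⁻¹ := by
    rw [show Complex.exp ((Real.pi : ℂ) * Complex.I * ω₁ / ω₂)
        - (Complex.exp ((Real.pi : ℂ) * Complex.I * ω₁ / ω₂))⁻¹
        = (Complex.exp ((Real.pi : ℂ) * Complex.I * ω₁ / ω₂) ^ 2 - 1)
          * (Complex.exp ((Real.pi : ℂ) * Complex.I * ω₁ / ω₂))⁻¹ from by
      field_simp]
    rw [mul_inv, inv_inv]
    ring
  have hQv : Complex.exp ((Real.pi : ℂ) * Complex.I * ω₁ / ω₂)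
      * (Complex.exp ((Real.pi : ℂ) * Complex.I * ω₁ / ω₂))⁻¹ = 1 := mul_inv_cancel₀ hq0
  have e2 : ∀ s : ℂ, Complex.exp (2 * (Real.pi : ℂ) * (s + Complex.I * ω₁) / ω₂)
      = Complex.exp (2 * (Real.pi : ℂ) * s / ω₂)
        * Complex.exp ((Real.pi : ℂ) * Complex.I * ω₁ / ω₂) ^ 2 := by
    intro s
    rw [show 2 * (Real.pi : ℂ) * (s + Complex.I * ω₁) / ω₂
        = 2 * (Real.pi : ℂ) * s / ω₂ + ((Real.pi : ℂ) * Complex.I * ω₁ / ω₂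
          + (Real.pi : ℂ) * Complex.I * ω₁ / ω₂) from by ring, exp_add_sq']
  have e3 : ∀ s : ℂ, Complex.exp (2 * (Real.pi : ℂ) * (s + -(Complex.I * ω₁)) / ω₂)
      = Complex.exp (2 * (Real.pi : ℂ) * s / ω₂)
        * (Complex.exp ((Real.pi : ℂ) * Complex.I * ω₁ / ω₂) ^ 2)⁻¹ := by
    intro s
    rw [show 2 * (Real.pi : ℂ) * (s + -(Complex.I * ω₁)) / ω₂
        = 2 * (Real.pi : ℂ) * s / ω₂ - ((Real.pi : ℂ) * Complex.I * ω₁ / ω₂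
          + (Real.pi : ℂ) * Complex.I * ω₁ / ω₂) from by ring, exp_sub_sq']
  have hwv : (Complex.exp ((Real.pi : ℂ) * Complex.I * ω₁ / ω₂) ^ 2 - 1)⁻¹
      * (Complex.exp ((Real.pi : ℂ) * Complex.I * ω₁ / ω₂) ^ 2 - 1) = 1 := inv_mul_cancel₀ h21
  refine ⟨⟨?_, ?_⟩, ?_, ?_, ?_, ?_⟩
  · ext φ t
    simp only [K, K', LinearMap.coe_comp, Function.comp_apply, shiftMulOp, LinearMap.coe_mk,
      AddHom.coe_mk, LinearMap.id_coe, id_eq, neg_add_cancel_right, add_neg_cancel_right]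
    rw [← mul_assoc, ← Complex.exp_add]
    simp
  · ext φ t
    simp only [K, K', LinearMap.coe_comp, Function.comp_apply, shiftMulOp, LinearMap.coe_mk,
      AddHom.coe_mk, LinearMap.id_coe, id_eq, neg_add_cancel_right, add_neg_cancel_right]
    rw [← mul_assoc, ← Complex.exp_add]
    simp
  · ext φ t
    simp only [K, E, q, LinearMap.coe_comp, Function.comp_apply, LinearMap.smul_apply,
      LinearMap.sub_apply, shiftMulOp, LinearMap.coe_mk, AddHom.coe_mk, Pi.smul_apply,
      Pi.sub_apply, smul_eq_mul, add_zero, neg_add_cancel_right, add_neg_cancel_right]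
    rw [show -(2 * (Real.pi : ℂ) * (t + -(Complex.I * ω₁)) / ω₂)
        = -(2 * (Real.pi : ℂ) * t / ω₂) + ((Real.pi : ℂ) * Complex.I * ω₁ / ω₂
          + (Real.pi : ℂ) * Complex.I * ω₁ / ω₂) from by ring, exp_add_sq']
    ring
  · ext φ t
    simp only [K, F, q, LinearMap.coe_comp, Function.comp_apply, LinearMap.smul_apply,
      LinearMap.sub_apply, shiftMulOp, LinearMap.coe_mk, AddHom.coe_mk, Pi.smul_apply,
      Pi.sub_apply, smul_eq_mul, add_zero, neg_add_cancel_right, add_neg_cancel_right]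
    rw [show 2 * (Real.pi : ℂ) * (t + -(Complex.I * ω₁)) / ω₂
        = 2 * (Real.pi : ℂ) * t / ω₂ - ((Real.pi : ℂ) * Complex.I * ω₁ / ω₂
          + (Real.pi : ℂ) * Complex.I * ω₁ / ω₂) from by ring, exp_sub_sq']
    field_simp
  · ext φ t
    have hCv : Complex.exp (2 * (Real.pi : ℂ) * t / ω₂)
        * (Complex.exp (2 * (Real.pi : ℂ) * t / ω₂))⁻¹ = 1 :=
      mul_inv_cancel₀ (Complex.exp_ne_zero _)
    simp only [K, K', E, F, q, LinearMap.coe_comp, Function.comp_apply, LinearMap.smul_apply,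
      LinearMap.sub_apply, LinearMap.add_apply, shiftMulOp, LinearMap.coe_mk, AddHom.coe_mk,
      Pi.smul_apply, Pi.sub_apply, Pi.add_apply, smul_eq_mul, add_zero, LinearMap.id_coe,
      id_eq, neg_add_cancel_right, add_neg_cancel_right]
    simp only [Complex.exp_neg, e2, e3]
    revert hd2 hQv hCv hwv
    generalize Complex.exp ((Real.pi : ℂ) * Complex.I * ω₁ / ω₂) = Q
    generalize Complex.exp ((Real.pi : ℂ) * Complex.I * lam / ω₂) = B
    generalize Complex.exp (2 * (Real.pi : ℂ) * t / ω₂) = C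
    intro hd2 hQv hwv hCv
    rw [hd2]
    simp only [mul_inv, ← inv_pow]
    linear_combination (-1 * B⁻¹ * C * C⁻¹ * (Q ^ 2 - 1)⁻¹ ^ 2 * φ (t + Complex.I * ω₁) + B * C * C⁻¹ * (Q ^ 2 - 1)⁻¹ ^ 2 * φ (t + -(Complex.I * ω₁)) + -1 * Q * Q⁻¹ * B⁻¹ * C * C⁻¹ * (Q ^ 2 - 1)⁻¹ ^ 2 * φ (t + Complex.I * ω₁) + Q * Q⁻¹ * B * C * C⁻¹ * (Q ^ 2 - 1)⁻¹ ^ 2 * φ (t + -(Complex.I * ω₁)) + 2 * Q ^ 2 * B⁻¹ * C * C⁻¹ * (Q ^ 2 - 1)⁻¹ ^ 2 * φ (t + Complex.I * ω₁) + -2 * Q ^ 2 * B * C * C⁻¹ * (Q ^ 2 - 1)⁻¹ ^ 2 * φ (t + -(Complex.I * ω₁)) + -1 * Q ^ 2 * Q⁻¹ ^ 2 * B⁻¹ * C * C⁻¹ * (Q ^ 2 - 1)⁻¹ ^ 2 * φ (t + Complex.I * ω₁) + Q ^ 2 * Q⁻¹ ^ 2 * B * C * C⁻¹ * (Q ^ 2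 - 1)⁻¹ ^ 2 * φ (t + -(Complex.I * ω₁)) + Q ^ 3 * Q⁻¹ * B⁻¹ * C * C⁻¹ * (Q ^ 2 - 1)⁻¹ ^ 2 * φ (t + Complex.I * ω₁) + -1 * Q ^ 3 * Q⁻¹ * B * C * C⁻¹ * (Q ^ 2 - 1)⁻¹ ^ 2 * φ (t + -(Complex.I * ω₁))) * hQv
      + (-1 * B⁻¹ * (Q ^ 2 - 1)⁻¹ ^ 2 * φ (t + Complex.I * ω₁) + B * (Q ^ 2 - 1)⁻¹ ^ 2 * φ (t + -(Complex.I * ω₁)) + 2 * Q ^ 2 * B⁻¹ * (Q ^ 2 - 1)⁻¹ ^ 2 * φ (t + Complex.I * ω₁) + -2 * Q ^ 2 * B * (Q ^ 2 - 1)⁻¹ ^ 2 * φ (t + -(Complex.I * ω₁)) + -1 * Q ^ 4 * B⁻¹ * (Q ^ 2 - 1)⁻¹ ^ 2 * φ (t + Complex.I * ω₁) + Q ^ 4 * B * (Q ^ 2 - 1)⁻¹ ^ 2 * φ (t + -(Complex.I * ω₁))) * hCv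
      + (-1 * B⁻¹ * φ (t + Complex.I * ω₁) + B⁻¹ * (Q ^ 2 - 1)⁻¹ * φ (t + Complex.I * ω₁) + B * φ (t + -(Complex.I * ω₁)) + -1 * B * (Q ^ 2 - 1)⁻¹ * φ (t + -(Complex.I * ω₁)) + -1 * Q ^ 2 * B⁻¹ * (Q ^ 2 - 1)⁻¹ * φ (t + Complex.I * ω₁) + Q ^ 2 * B * (Q ^ 2 - 1)⁻¹ * φ (t + -(Complex.I * ω₁))) * hwv
  · ext φ t
    have hCv : Complex.exp (2 * (Real.pi : ℂ) * t / ω₂)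
        * (Complex.exp (2 * (Real.pi : ℂ) * t / ω₂))⁻¹ = 1 :=
      mul_inv_cancel₀ (Complex.exp_ne_zero _)
    simp only [K, K', E, F, q, LinearMap.coe_comp, Function.comp_apply, LinearMap.smul_apply,
      LinearMap.sub_apply, LinearMap.add_apply, shiftMulOp, LinearMap.coe_mk, AddHom.coe_mk,
      Pi.smul_apply, Pi.sub_apply, Pi.add_apply, smul_eq_mul, add_zero, LinearMap.id_coe,
      id_eq, neg_add_cancel_right, add_neg_cancel_right]
    simp only [Complex.exp_neg, e2, e3]
    revert hd2 hQv hCv hwv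
    generalize Complex.exp ((Real.pi : ℂ) * Complex.I * ω₁ / ω₂) = Q
    generalize Complex.exp ((Real.pi : ℂ) * Complex.I * lam / ω₂) = B
    generalize Complex.exp (2 * (Real.pi : ℂ) * t / ω₂) = C
    intro hd2 hQv hwv hCv
    rw [hd2]
    simp only [mul_inv, ← inv_pow]
    linear_combination (-1 * Q⁻¹ * B⁻¹ * C * C⁻¹ * (Q ^ 2 - 1)⁻¹ ^ 2 * φ (t + Complex.I * ω₁) + Q⁻¹ * B⁻¹ * C * C⁻¹ * (Q ^ 2 - 1)⁻¹ ^ 2 * φ t + Q * B⁻¹ * (Q ^ 2 - 1)⁻¹ * φ (t + Complex.I * ω₁) + -1 * Q * B⁻¹ * (Q ^ 2 - 1)⁻¹ * φ t + -1 * Q * B⁻¹ * (Q ^ 2 - 1)⁻¹ ^ 2 * φ (t + Complex.I * ω₁) + Q * B⁻¹ * (Q ^ 2 - 1)⁻¹ ^ 2 * φ t + 2 * Q * B⁻¹ * C * C⁻¹ * (Q ^ 2 - 1)⁻¹ ^ 2 * φ (t + Complex.I * ω₁) + -2 * Q * B⁻¹ * C * C⁻¹ * (Q ^ 2 - 1)⁻¹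 ^ 2 * φ t + -1 * Q * B * C * C⁻¹ * (Q ^ 2 - 1)⁻¹ ^ 2 * φ (t + -(Complex.I * ω₁)) + Q * B * C * C⁻¹ * (Q ^ 2 - 1)⁻¹ ^ 2 * φ t + -1 * Q * Q⁻¹ ^ 2 * B⁻¹ * C * C⁻¹ * (Q ^ 2 - 1)⁻¹ ^ 2 * φ (t + Complex.I * ω₁) + Q * Q⁻¹ ^ 2 * B⁻¹ * C * C⁻¹ * (Q ^ 2 - 1)⁻¹ ^ 2 * φ t + 2 * Q ^ 2 * Q⁻¹ * B⁻¹ * C * C⁻¹ * (Q ^ 2 - 1)⁻¹ ^ 2 * φ (t + Complex.I * ω₁) + -2 * Q ^ 2 * Q⁻¹ * B⁻¹ * C * C⁻¹ * (Q ^ 2 - 1)⁻¹ ^ 2 * φ t + -1 * Q ^ 2 * Q⁻¹ * B * C * C⁻¹ * (Q ^ 2 - 1)⁻¹ ^ 2 * φ (t + -(Complex.I * ω₁)) + Q ^ 2 * Q⁻¹ * B * C * C⁻¹ * (Q ^ 2 - 1)⁻¹ ^ 2 * φ t + -1 * Q ^ 2 * Q⁻¹ ^ 3 * B⁻¹ *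 C * C⁻¹ * (Q ^ 2 - 1)⁻¹ ^ 2 * φ (t + Complex.I * ω₁) + Q ^ 2 * Q⁻¹ ^ 3 * B⁻¹ * C * C⁻¹ * (Q ^ 2 - 1)⁻¹ ^ 2 * φ t + -1 * Q ^ 3 * B⁻¹ * C * C⁻¹ * (Q ^ 2 - 1)⁻¹ ^ 2 * φ (t + Complex.I * ω₁) + Q ^ 3 * B⁻¹ * C * C⁻¹ * (Q ^ 2 - 1)⁻¹ ^ 2 * φ t + 2 * Q ^ 3 * B * C * C⁻¹ * (Q ^ 2 - 1)⁻¹ ^ 2 * φ (t + -(Complex.I * ω₁)) + -2 * Q ^ 3 * B * C * C⁻¹ * (Q ^ 2 - 1)⁻¹ ^ 2 * φ t + 2 * Q ^ 3 * Q⁻¹ ^ 2 * B⁻¹ * C * C⁻¹ * (Q ^ 2 - 1)⁻¹ ^ 2 * φ (t + Complex.I * ω₁) + -2 * Q ^ 3 * Q⁻¹ ^ 2 * B⁻¹ * C * C⁻¹ * (Q ^ 2 - 1)⁻¹ ^ 2 * φ t + -1 * Q ^ 4 * Q⁻¹ * B⁻¹ * C * C⁻¹ * (Q ^ 2 - 1)⁻¹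 ^ 2 * φ (t + Complex.I * ω₁) + Q ^ 4 * Q⁻¹ * B⁻¹ * C * C⁻¹ * (Q ^ 2 - 1)⁻¹ ^ 2 * φ t) * hQv
      + (-1 * Q⁻¹ * B⁻¹ * (Q ^ 2 - 1)⁻¹ ^ 2 * φ (t + Complex.I * ω₁) + Q⁻¹ * B⁻¹ * (Q ^ 2 - 1)⁻¹ ^ 2 * φ t + 2 * Q * B⁻¹ * (Q ^ 2 - 1)⁻¹ ^ 2 * φ (t + Complex.I * ω₁) + -2 * Q * B⁻¹ * (Q ^ 2 - 1)⁻¹ ^ 2 * φ t + -1 * Q * B * (Q ^ 2 - 1)⁻¹ ^ 2 * φ (t + -(Complex.I * ω₁)) + Q * B * (Q ^ 2 - 1)⁻¹ ^ 2 * φ t + -1 * Q ^ 3 * B⁻¹ * (Q ^ 2 - 1)⁻¹ ^ 2 * φ (t + Complex.I * ω₁) + Q ^ 3 * B⁻¹ * (Q ^ 2 - 1)⁻¹ ^ 2 * φ t + 2 * Q ^ 3 * B * (Q ^ 2 - 1)⁻¹ ^ 2 * φ (t + -(Complex.I * ω₁)) + -2 * Q ^ 3 * B * (Q ^ 2 -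 1)⁻¹ ^ 2 * φ t + -1 * Q ^ 5 * B * (Q ^ 2 - 1)⁻¹ ^ 2 * φ (t + -(Complex.I * ω₁)) + Q ^ 5 * B * (Q ^ 2 - 1)⁻¹ ^ 2 * φ t) * hCv
      + (-1 * Q⁻¹ * B⁻¹ * φ (t + Complex.I * ω₁) + Q⁻¹ * B⁻¹ * φ t + Q⁻¹ * B⁻¹ * (Q ^ 2 - 1)⁻¹ * φ (t + Complex.I * ω₁) + -1 * Q⁻¹ * B⁻¹ * (Q ^ 2 - 1)⁻¹ * φ t + -1 * Q * B⁻¹ * (Q ^ 2 - 1)⁻¹ * φ (t + Complex.I * ω₁) + Q * B⁻¹ * (Q ^ 2 - 1)⁻¹ * φ t + -1 * Q * B * φ (t + -(Complex.I * ω₁)) + Q * B * φ t + Q * B * (Q ^ 2 - 1)⁻¹ * φ (t + -(Complex.I * ω₁)) + -1 * Q * B * (Q ^ 2 - 1)⁻¹ * φ t + -1 * Q ^ 3 * B * (Q ^ 2 - 1)⁻¹ * φ (t + -(Complex.I * ω₁)) + Q ^ 3 * B * (Q ^ 2 - 1)⁻¹ * φ t) * hwv
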